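/- Let c : ℝ → ℝ be continuously differentiable with 0 < c_* ≤ c(θ) ≤ c^* and c'(θ) ≥ 0 for all θ, let T > 0, and let u : ℝ × ℝ → ℝ be twice continuously differentiable solving u_tt = c(u)² u_xx on [0,T] × ℝ. Set S₀(z) := u_t(0,z) − c(u(0,z)) u_x(0,z) and suppose N := sup_{z ∈ ℝ} max(S₀(z), 0) is finite. Let (t,x₀) ∈ (0,T] × ℝ and suppose there exists a differentiable curve x₊ : [0,t] → ℝ with x₊'(τ) = +c(u(τ, x₊(τ))) for all τ and x₊(t) = x₀. Then S(t,x₀) ≤ √(c^*/c_*) · N, where S := u_t − c(u)u_x. -/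

import Mathlib

/-- Partial derivative in the first (time) variable. -/
noncomputable def pdt (u : ℝ × ℝ → ℝ) : ℝ × ℝ → ℝ :=
  fun p => deriv (fun s => u (s, p.2)) p.1

/-- Partial derivative in the second (space) variable. -/
noncomputable def pdx (u : ℝ × ℝ → ℝ) : ℝ × ℝ → ℝ :=
  fun p => deriv (fun y => u (p.1, y)) p.2

/-- The Riemann variable `R = u_t + c(u) u_x`. -/
noncomputable def Rv (c : ℝ → ℝ) (u : ℝ × ℝ → ℝ) : ℝ × ℝ → ℝ :=
  fun p => pdt u p + c (u p) * pdx u p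

/-- The Riemann variable `S = u_t - c(u) u_x`. -/
noncomputable def Sv (c : ℝ → ℝ) (u : ℝ × ℝ → ℝ) : ℝ × ℝ → ℝ :=
  fun p => pdt u p - c (u p) * pdx u p

lemma pdt_eq' (f : ℝ × ℝ → ℝ) (p : ℝ × ℝ) (hf : DifferentiableAt ℝ f p) :
    pdt f p = fderiv ℝ f p (1, 0) := by
  obtain ⟨a, b⟩ := p
  have h : HasDerivAt (fun s => f (s, b)) (fderiv ℝ f (a, b) (1, 0)) a := by
    have := hf.hasFDerivAt.comp_hasDerivAt a (HasDerivAt.prodMk (hasDerivAt_id a) (hasDerivAt_const a b))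
    exact this
  exact h.deriv

lemma pdx_eq' (f : ℝ × ℝ → ℝ) (p : ℝ × ℝ) (hf : DifferentiableAt ℝ f p) :
    pdx f p = fderiv ℝ f p (0, 1) := by
  obtain ⟨a, b⟩ := p
  have h : HasDerivAt (fun y => f (a, y)) (fderiv ℝ f (a, b) (0, 1)) b := by
    have := hf.hasFDerivAt.comp_hasDerivAt b (HasDerivAt.prodMk (hasDerivAt_const b a) (hasDerivAt_id b))
    exact this
  exact h.deriv

lemma clm_lin' (M : Type*) [NormedAddCommGroup M] [NormedSpace ℝ M]
    (L : (ℝ × ℝ) →L[ℝ] M) (a b : ℝ) : L (a, b) = a • L (1, 0) + b • L (0, 1) := by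
  have h : (a, b) = a • ((1:ℝ), (0:ℝ)) + b • ((0:ℝ), (1:ℝ)) := by
    simp [Prod.ext_iff]
  rw [h, map_add, map_smul, map_smul]

theorem stmt7 (c : ℝ → ℝ) (u : ℝ × ℝ → ℝ) (clow chigh T t x₀ : ℝ) (xp : ℝ → ℝ)
    (hc : ContDiff ℝ 1 c)
    (hclow : 0 < clow)
    (hcbd : ∀ θ, clow ≤ c θ ∧ c θ ≤ chigh)
    (hcmono : ∀ θ, 0 ≤ deriv c θ)
    (hT : 0 < T)
    (hu : ContDiff ℝ 2 u)
    (hwave : ∀ p : ℝ × ℝ, p.1 ∈ Set.Icc 0 T →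
      pdt (pdt u) p = (c (u p)) ^ 2 * pdx (pdx u) p)
    (hN : BddAbove (Set.range fun z : ℝ => max (Sv c u (0, z)) 0))
    (ht : t ∈ Set.Ioc 0 T)
    (hxp : ∀ τ ∈ Set.Icc 0 t, HasDerivAt xp (c (u (τ, xp τ))) τ)
    (hxpt : xp t = x₀) :
    Sv c u (t, x₀) ≤ Real.sqrt (chigh / clow) * (⨆ z : ℝ, max (Sv c u (0, z)) 0) := by
  obtain ⟨ht0, htT⟩ := ht
  have hud : Differentiable ℝ u := hu.differentiable (by norm_num)
  have hcd : Differentiable ℝ c := hc.differentiable one_ne_zero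
  set F : (ℝ × ℝ) → ((ℝ × ℝ) →L[ℝ] ℝ) := fderiv ℝ u with hFdef
  have hF : ContDiff ℝ 1 F := hu.fderiv_right (by norm_num)
  have hFd : Differentiable ℝ F := hF.differentiable one_ne_zero
  set H : (ℝ × ℝ) → ((ℝ × ℝ) →L[ℝ] ((ℝ × ℝ) →L[ℝ] ℝ)) := fun p => fderiv ℝ F p with hHdef
  have hsymm : ∀ (p : ℝ × ℝ) (v w : ℝ × ℝ), H p v w = H p w v := fun p v w =>
    second_derivative_symmetric (fun y => (hud y).hasFDerivAt) ((hFd p).hasFDerivAt) v w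
  have hFapp : ∀ (v : ℝ × ℝ) (p : ℝ × ℝ), HasFDerivAt (fun q => F q v)
      ((ContinuousLinearMap.apply ℝ ℝ v).comp (H p)) p := fun v p =>
    ((ContinuousLinearMap.apply ℝ ℝ v).hasFDerivAt).comp p ((hFd p).hasFDerivAt)
  have hpdt : pdt u = fun q => F q (1, 0) := funext fun q => pdt_eq' u q (hud q)
  have hpdx : pdx u = fun q => F q (0, 1) := funext fun q => pdx_eq' u q (hud q)
  have hSv : ∀ p : ℝ × ℝ, Sv c u p = F p (1, 0) - c (u p) * F p (0, 1) := by
    intro p; simp only [Sv, hpdt, hpdx]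
  have hptt : ∀ p : ℝ × ℝ, pdt (pdt u) p = H p (1, 0) (1, 0) := by
    intro p
    rw [hpdt, pdt_eq' _ p (hFapp (1, 0) p).differentiableAt, (hFapp (1, 0) p).fderiv]
    rfl
  have hpxx : ∀ p : ℝ × ℝ, pdx (pdx u) p = H p (0, 1) (0, 1) := by
    intro p
    rw [hpdx, pdx_eq' _ p (hFapp (0, 1) p).differentiableAt, (hFapp (0, 1) p).fderiv]
    rfl
  have hwave' : ∀ p : ℝ × ℝ, p.1 ∈ Set.Icc 0 T →
      H p (1, 0) (1, 0) = (c (u p)) ^ 2 * H p (0, 1) (0, 1) := by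
    intro p hp
    rw [← hptt p, ← hpxx p]; exact hwave p hp
  set φ : ℝ → ℝ := fun σ => Sv c u (σ, xp σ) * (Real.sqrt (c (u (σ, xp σ))))⁻¹ with hφdef
  have hφeq : φ = fun σ => (F (σ, xp σ) (1, 0) - c (u (σ, xp σ)) * F (σ, xp σ) (0, 1)) *
      (Real.sqrt (c (u (σ, xp σ))))⁻¹ := by
    funext σ
    show Sv c u (σ, xp σ) * (Real.sqrt (c (u (σ, xp σ))))⁻¹ = _
    rw [hSv (σ, xp σ)]
  -- key derivative fact
  have key : ∀ τ ∈ Set.Icc 0 t, ∃ d ≤ 0, HasDerivAt φ d τ := by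
    intro τ hτ
    set p : ℝ × ℝ := (τ, xp τ) with hp
    set cP : ℝ := c (u p) with hcPdef
    set ut : ℝ := F p (1, 0) with hut
    set ux : ℝ := F p (0, 1) with hux
    set q : ℝ := deriv c (u p) with hq
    have hcP0 : 0 < cP := lt_of_lt_of_le hclow (hcbd (u p)).1
    set s : ℝ := Real.sqrt cP with hs
    have hs0 : 0 < s := Real.sqrt_pos.mpr hcP0
    have hs2 : s ^ 2 = cP := Real.sq_sqrt hcP0.le
    have hγ : HasDerivAt (fun σ => ((σ : ℝ), xp σ)) ((1 : ℝ), cP) τ :=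
      HasDerivAt.prodMk (hasDerivAt_id τ) (hxp τ hτ)
    have hRlin : F p (1, cP) = ut + cP * ux := by
      rw [clm_lin' ℝ (F p) 1 cP]; simp [smul_eq_mul, ← hut, ← hux]
    set R : ℝ := ut + cP * ux with hR
    have huc : HasDerivAt (fun σ => u (σ, xp σ)) R τ := by
      have h0 := (hud p).hasFDerivAt.comp_hasDerivAt τ hγ
      rw [hRlin] at h0; exact h0
    have hcu : HasDerivAt (fun σ => c (u (σ, xp σ))) (q * R) τ :=
      ((hcd (u p)).hasDerivAt).comp τ huc
    have hFe1 : HasDerivAt (fun σ => F (σ, xp σ) (1, 0)) (H p (1, cP) (1, 0)) τ :=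
      by have h := (hFapp (1, 0) p).comp_hasDerivAt τ hγ; exact h
    have hFe2 : HasDerivAt (fun σ => F (σ, xp σ) (0, 1)) (H p (1, cP) (0, 1)) τ :=
      by have h := (hFapp (0, 1) p).comp_hasDerivAt τ hγ; exact h
    have hg : HasDerivAt (fun σ => F (σ, xp σ) (1, 0) - c (u (σ, xp σ)) * F (σ, xp σ) (0, 1))
        (H p (1, cP) (1, 0) - (q * R * ux + cP * H p (1, cP) (0, 1))) τ :=
      hFe1.sub (hcu.mul hFe2)
    have hgval : H p (1, cP) (1, 0) - (q * R * ux + cP * H p (1, cP) (0, 1))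
        = -(q * R * ux) := by
      have e1 : H p (1, cP) = H p (1, 0) + cP • H p (0, 1) := by
        have h0 := clm_lin' _ (H p) 1 cP; simpa using h0
      have hsym := hsymm p (0, 1) (1, 0)
      have hw := hwave' p ⟨hτ.1, hτ.2.trans htT⟩
      rw [e1]
      simp only [ContinuousLinearMap.add_apply, ContinuousLinearMap.coe_smul',
        Pi.smul_apply, smul_eq_mul]
      rw [← hcPdef] at hw
      linear_combination hw + cP * hsym
    rw [hgval] at hg
    have hsqrt : HasDerivAt (fun σ => Real.sqrt (c (u (σ, xp σ)))) (1 / (2 * s) * (q * R)) τ :=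
      (Real.hasDerivAt_sqrt hcP0.ne').comp τ hcu
    have hinv : HasDerivAt (fun σ => (Real.sqrt (c (u (σ, xp σ))))⁻¹)
        (-(1 / (2 * s) * (q * R)) / s ^ 2) τ := hsqrt.inv hs0.ne'
    have hφ' : HasDerivAt (fun σ => (F (σ, xp σ) (1, 0) - c (u (σ, xp σ)) * F (σ, xp σ) (0, 1)) *
        (Real.sqrt (c (u (σ, xp σ))))⁻¹)
        ((-(q * R * ux)) * s⁻¹ + (ut - cP * ux) * (-(1 / (2 * s) * (q * R)) / s ^ 2)) τ :=
      hg.mul hinv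
    have hval : (-(q * R * ux)) * s⁻¹ + (ut - cP * ux) * (-(1 / (2 * s) * (q * R)) / s ^ 2)
        = -(q * R ^ 2) / (2 * cP * s) := by
      rw [hR, ← hs2]
      field_simp
      ring
    refine ⟨-(q * R ^ 2) / (2 * cP * s), ?_, ?_⟩
    · apply div_nonpos_of_nonpos_of_nonneg
      · simp only [neg_nonpos]
        exact mul_nonneg (hcmono (u p)) (sq_nonneg R)
      · positivity
    · rw [hφeq, ← hval]
      exact hφ'
  -- monotonicity
  have hconts : ContinuousOn φ (Set.Icc 0 t) := by
    intro τ hτ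
    obtain ⟨d, _, hd⟩ := key τ hτ
    exact hd.continuousAt.continuousWithinAt
  have hdiff : DifferentiableOn ℝ φ (interior (Set.Icc 0 t)) := by
    rw [interior_Icc]
    intro τ hτ
    obtain ⟨d, _, hd⟩ := key τ (Set.Ioo_subset_Icc_self hτ)
    exact hd.differentiableAt.differentiableWithinAt
  have hder : ∀ τ ∈ interior (Set.Icc 0 t), deriv φ τ ≤ 0 := by
    rw [interior_Icc]
    intro τ hτ
    obtain ⟨d, hd0, hd⟩ := key τ (Set.Ioo_subset_Icc_self hτ)
    rw [hd.deriv]; exact hd0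
  have anti := antitoneOn_of_deriv_nonpos (convex_Icc 0 t) hconts hdiff hder
  have hmono : φ t ≤ φ 0 :=
    anti (Set.left_mem_Icc.mpr ht0.le) (Set.right_mem_Icc.mpr ht0.le) ht0.le
  -- final arithmetic
  set N : ℝ := ⨆ z : ℝ, max (Sv c u (0, z)) 0 with hNdef
  have hNz : ∀ z : ℝ, max (Sv c u (0, z)) 0 ≤ N := fun z => le_ciSup hN z
  have hN0 : 0 ≤ N := le_trans (le_max_right _ 0) (hNz 0)
  set cE : ℝ := c (u (t, x₀)) with hcE
  set c0 : ℝ := c (u (0, xp 0)) with hc0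
  have hcE0 : 0 < cE := lt_of_lt_of_le hclow (hcbd _).1
  have hc00 : 0 < c0 := lt_of_lt_of_le hclow (hcbd _).1
  have hsE0 : 0 < Real.sqrt cE := Real.sqrt_pos.mpr hcE0
  have hs00 : 0 < Real.sqrt c0 := Real.sqrt_pos.mpr hc00
  have hsl0 : 0 < Real.sqrt clow := Real.sqrt_pos.mpr hclow
  have hφt : φ t = Sv c u (t, x₀) * (Real.sqrt cE)⁻¹ := by
    rw [hφdef]; simp only [hxpt, ← hcE]
  have hφ0 : φ 0 = Sv c u (0, xp 0) * (Real.sqrt c0)⁻¹ := rfl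
  have hS' : Sv c u (t, x₀) * (Real.sqrt cE)⁻¹ ≤ Sv c u (0, xp 0) * (Real.sqrt c0)⁻¹ := by
    rw [← hφt, ← hφ0]; exact hmono
  have hS0N : Sv c u (0, xp 0) ≤ N := le_trans (le_max_left _ _) (hNz (xp 0))
  have hinvle : (Real.sqrt c0)⁻¹ ≤ (Real.sqrt clow)⁻¹ := by
    apply inv_anti₀ hsl0
    exact Real.sqrt_le_sqrt (hcbd _).1
  have h3 : Sv c u (0, xp 0) * (Real.sqrt c0)⁻¹ ≤ N * (Real.sqrt clow)⁻¹ :=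
    le_trans (mul_le_mul_of_nonneg_right hS0N (inv_nonneg.2 (Real.sqrt_nonneg _)))
      (mul_le_mul_of_nonneg_left hinvle hN0)
  have hchigh0 : 0 ≤ chigh := le_trans hclow.le (le_trans (hcbd 0).1 (hcbd 0).2)
  calc Sv c u (t, x₀) = (Sv c u (t, x₀) * (Real.sqrt cE)⁻¹) * Real.sqrt cE := by
        rw [inv_mul_cancel_right₀ hsE0.ne']
    _ ≤ (Sv c u (0, xp 0) * (Real.sqrt c0)⁻¹) * Real.sqrt cE :=
        mul_le_mul_of_nonneg_right hS' (Real.sqrt_nonneg _)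
    _ ≤ (N * (Real.sqrt clow)⁻¹) * Real.sqrt cE :=
        mul_le_mul_of_nonneg_right h3 (Real.sqrt_nonneg _)
    _ ≤ (N * (Real.sqrt clow)⁻¹) * Real.sqrt chigh := by
        apply mul_le_mul_of_nonneg_left (Real.sqrt_le_sqrt (hcbd _).2)
        exact mul_nonneg hN0 (inv_nonneg.2 (Real.sqrt_nonneg _))
    _ = Real.sqrt (chigh / clow) * N := by
        rw [Real.sqrt_div hchigh0]
        field_simp
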